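/- Suppose p is odd. Then the set Hom(W⁰, 𝔽_{p^n}) of group homomorphisms from the multiplicative group W⁰ to the additive group of 𝔽_{p^n} is an 𝔽_{p^n}-vector space under pointwise operations, and g_0, g_1, …, g_{n−1} form a basis: every group homomorphism φ : W⁰ → (𝔽_{p^n}, +) can be written uniquely as φ = λ_0·g_0 + λ_1·g_1 + ⋯ + λ_{n−1}·g_{n−1} with λ_i ∈ 𝔽_{p^n}. In particular this Hom-space has dimension n over 𝔽_{p^n}. -/

import Mathlib

/-- The group of 1-units `W⁰ = {u ∈ W^× : u − 1 ∈ pW}` of the Witt vectors `W = W(K)`,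
as a subgroup of the unit group `W^×`. -/
noncomputable def oneUnits (p : ℕ) [Fact p.Prime] (K : Type) [Field K] :
    Subgroup (WittVector p K)ˣ where
  carrier := {u | ∃ y : WittVector p K, (u : WittVector p K) - 1 = p * y}
  one_mem' := ⟨0, by simp⟩
  mul_mem' := by
    rintro a b ⟨x, hx⟩ ⟨y, hy⟩
    refine ⟨x * (b : WittVector p K) + y, ?_⟩
    have hab : ((a * b : (WittVector p K)ˣ) : WittVector p K)
        = (a : WittVector p K) * (b : WittVector p K) := rfl
    rw [hab]
    linear_combination (b : WittVector p K) * hx + hy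
  inv_mem' := by
    rintro a ⟨x, hx⟩
    refine ⟨-(((a⁻¹ : (WittVector p K)ˣ) : WittVector p K) * x), ?_⟩
    have h : ((a⁻¹ : (WittVector p K)ˣ) : WittVector p K) * (a : WittVector p K) = 1 := by
      rw [← Units.val_mul, inv_mul_cancel, Units.val_one]
    linear_combination (-((a⁻¹ : (WittVector p K)ˣ) : WittVector p K)) * hx + h

/-- For `u ∈ W⁰`, writing `u = 1 + p·y` (the witness `y` is unique since `p` is a
nonzerodivisor in `W`), `g₀ u = π y` where `π` is the residue map (0th Witt coefficient). -/
noncomputable def gZero (p : ℕ) [Fact p.Prime] (K : Type) [Field K]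
    (u : oneUnits p K) : K :=
  WittVector.constantCoeff
    (Classical.choose
      (show ∃ y : WittVector p K, ((u : (WittVector p K)ˣ) : WittVector p K) - 1 = p * y
        from u.2))


/-- `gᵢ : W⁰ → 𝔽_{p^n}`, `gᵢ u = (g₀ u)^(pⁱ)`. -/
noncomputable def gIdx (p : ℕ) [Fact p.Prime] (K : Type) [Field K]
    (i : ℕ) (u : oneUnits p K) : K :=
  gZero p K u ^ p ^ i

set_option linter.dupNamespace false


namespace WittHelper
open WittVector

set_option linter.unusedSectionVars false
variable (p : ℕ) [Fact p.Prime] (K : Type) [Field K] [CharP K p]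

local notation "𝕎" => WittVector p K

lemma iter_frob_one (k : ℕ) : (frobenius)^[k] (1 : 𝕎) = 1 := by
  induction k with
  | zero => rfl
  | succ k ih => rw [Function.iterate_succ_apply', ih]; exact map_one _

lemma p_pow_eq (k : ℕ) : (p : 𝕎) ^ k = verschiebung^[k] 1 := by
  induction k with
  | zero => simp
  | succ k ih =>
    have hp : (p : 𝕎) = verschiebung^[1] 1 := by
      have := verschiebung_frobenius (p := p) (R := K) 1
      simpa using this.symm
    rw [pow_succ, ih, hp, iterate_verschiebung_mul, iter_frob_one, iter_frob_one, one_mul]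

lemma p_pow_mul (k : ℕ) (x : 𝕎) :
    (p : 𝕎) ^ k * x = verschiebung^[k] (frobenius^[k] x) := by
  rw [p_pow_eq, iterate_verschiebung_mul_left, one_mul]

lemma coeff_iter_versch_lt (x : 𝕎) {k i : ℕ} (h : i < k) :
    (verschiebung^[k] x).coeff i = 0 := by
  induction k generalizing i with
  | zero => omega
  | succ k ih =>
    rw [Function.iterate_succ_apply']
    cases i with
    | zero => exact verschiebung_coeff_zero _
    | succ i => rw [verschiebung_coeff_succ]; exact ih (by omega)

variable [PerfectRing K p]

lemma low_coeff_zero_iff (k : ℕ) (x : 𝕎) :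
    (∀ i < k, x.coeff i = 0) ↔ ∃ c, x = (p : 𝕎) ^ k * c := by
  constructor
  · intro h
    obtain ⟨c, hc⟩ := (Function.Surjective.iterate (frobenius_bijective p K).2 k) (x.shift k)
    exact ⟨c, by rw [p_pow_mul, hc, ← eq_iterate_verschiebung h]⟩
  · rintro ⟨c, rfl⟩ i hi
    rw [p_pow_mul]
    exact coeff_iter_versch_lt p K _ hi

lemma coeff_eq_iff_mod (k : ℕ) (x y : 𝕎) :
    (∀ i < k, x.coeff i = y.coeff i) ↔ ∃ c, x - y = (p : 𝕎) ^ k * c := by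
  rw [← low_coeff_zero_iff, ← WittVector.mem_ker_truncate]
  constructor
  · intro h
    have : truncate k x = truncate k y := by
      apply TruncatedWittVector.ext
      intro i
      rw [coeff_truncate, coeff_truncate]
      exact h i i.2
    simpa [RingHom.mem_ker, map_sub, sub_eq_zero] using this
  · intro h i hi
    have : truncate k x = truncate k y := by
      rw [RingHom.mem_ker, map_sub, sub_eq_zero] at h
      exact h
    have := congrArg (fun z => TruncatedWittVector.coeff ⟨i, hi⟩ z) this
    simpa [coeff_truncate] using this

lemma eq_of_forall_mod (x y : 𝕎) (h : ∀ k, ∃ c, x - y = (p : 𝕎) ^ k * c) : x = y := by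
  apply WittVector.ext
  intro i
  exact ((coeff_eq_iff_mod p K (i + 1) x y).2 (h (i + 1))) i (by omega)



lemma nat_dvd (hodd : Odd p) {k : ℕ} (hk : 2 ≤ k) : p ^ 3 ∣ p.choose k * p ^ k := by
  have hp := (Fact.out : p.Prime)
  have h3 : 3 ≤ p := by
    have h2 := hp.two_le
    have : p ≠ 2 := by rintro rfl; exact (Nat.not_odd_iff_even.2 (by decide)) hodd
    omega
  rcases eq_or_lt_of_le hk with rfl | hk3
  · have h1 : p ∣ p.choose 2 := hp.dvd_choose_self (by omega) (by omega)
    have : p ^ 3 = p * p ^ 2 := by ring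
    rw [this]
    exact mul_dvd_mul h1 dvd_rfl
  · exact Dvd.dvd.mul_left (pow_dvd_pow p (by omega)) _

/-- The error polynomial. -/
noncomputable def G (w : 𝕎) : 𝕎 :=
  ∑ k ∈ Finset.Icc 2 p, ((p.choose k * p ^ k / p ^ 3 : ℕ) : 𝕎) * w ^ k

lemma key_identity (hodd : Odd p) (w : 𝕎) :
    (1 + p * w) ^ p = 1 + p ^ 2 * w + p ^ 3 * G p K w := by
  have hp2 := (Fact.out : p.Prime).two_le
  have hsplit : Finset.range (p + 1) = insert 0 (insert 1 (Finset.Icc 2 p)) := by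
    ext m; simp only [Finset.mem_range, Finset.mem_insert, Finset.mem_Icc]; omega
  calc (1 + p * w) ^ p = ((p : 𝕎) * w + 1) ^ p := by ring
    _ = ∑ k ∈ Finset.range (p + 1), ((p : 𝕎) * w) ^ k * 1 ^ (p - k) * (p.choose k : 𝕎) :=
        add_pow _ _ _
    _ = ∑ k ∈ Finset.range (p + 1), ((p.choose k * p ^ k : ℕ) : 𝕎) * w ^ k := by
        apply Finset.sum_congr rfl
        intro k _
        push_cast
        ring
    _ = 1 + p ^ 2 * w + p ^ 3 * G p K w := by
        rw [hsplit, Finset.sum_insert (by simp only [Finset.mem_insert, Finset.mem_Icc]; omega), Finset.sum_insert (by simp only [Finset.mem_Icc]; omega)]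
        have h0 : ((p.choose 0 * p ^ 0 : ℕ) : 𝕎) * w ^ 0 = 1 := by simp
        have h1 : ((p.choose 1 * p ^ 1 : ℕ) : 𝕎) * w ^ 1 = p ^ 2 * w := by
          rw [Nat.choose_one_right]
          push_cast
          ring
        have hsum : ∑ k ∈ Finset.Icc 2 p, ((p.choose k * p ^ k : ℕ) : 𝕎) * w ^ k
            = p ^ 3 * G p K w := by
          rw [G, Finset.mul_sum]
          apply Finset.sum_congr rfl
          intro k hk
          rw [Finset.mem_Icc] at hk
          rw [← mul_assoc, ← Nat.cast_pow, ← Nat.cast_mul,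
            Nat.mul_div_cancel' (nat_dvd p hodd hk.1)]
        rw [h0, h1, hsum]
        ring

lemma G_lipschitz (w w' : 𝕎) : ∃ t, G p K w - G p K w' = (w - w') * t := by
  suffices h : (w - w') ∣ G p K w - G p K w' by
    obtain ⟨t, ht⟩ := h; exact ⟨t, ht⟩
  rw [G, G, ← Finset.sum_sub_distrib]
  apply Finset.dvd_sum
  intro k _
  rw [← mul_sub]
  exact Dvd.dvd.mul_left (sub_dvd_pow_sub_pow w w' k) _



lemma exists_pth_root (hodd : Odd p) [PerfectRing K p] (z : 𝕎) :
    ∃ w : 𝕎, (1 + p * w) ^ p = 1 + p ^ 2 * z := by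
  classical
  let s : ℕ → 𝕎 := fun k => Nat.rec z (fun _ w => z - p * G p K w) k
  have hsS : ∀ k, s (k + 1) = z - p * G p K (s k) := fun k => rfl
  have h1 : ∀ k, ∃ c, s (k + 1) - s k = (p : 𝕎) ^ k * c := by
    intro k
    induction k with
    | zero =>
      refine ⟨-(p * G p K z), ?_⟩
      have e := hsS 0
      have e0 : s 0 = z := rfl
      rw [e, e0]
      ring
    | succ k ih =>
      obtain ⟨c, hc⟩ := ih
      obtain ⟨t, ht⟩ := G_lipschitz p K (s (k + 1)) (s k)
      refine ⟨-(c * t), ?_⟩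
      have e2 := hsS (k + 1)
      have e1 := hsS k
      linear_combination e2 - e1 - (p : 𝕎) * ht - (p : 𝕎) * t * hc
  have h2 : ∀ i k, i ≤ k → ∃ c, s k - s i = (p : 𝕎) ^ i * c := by
    intro i k hik
    induction k with
    | zero =>
      have : i = 0 := by omega
      subst this
      exact ⟨0, by ring⟩
    | succ k ih =>
      rcases Nat.lt_or_ge i (k + 1) with h | h
      · obtain ⟨c2, hc2⟩ := ih (by omega)
        obtain ⟨c1, hc1⟩ := h1 k
        refine ⟨(p : 𝕎) ^ (k - i) * c1 + c2, ?_⟩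
        have hp : (p : 𝕎) ^ k = (p : 𝕎) ^ i * (p : 𝕎) ^ (k - i) := by
          rw [← pow_add, Nat.add_sub_cancel' (by omega)]
        linear_combination hc1 + hc2 + c1 * hp
      · have : i = k + 1 := by omega
        subst this
        exact ⟨0, by ring⟩
  let L : 𝕎 := WittVector.mk p (fun i => (s (i + 1)).coeff i)
  have h3 : ∀ k, ∃ c, L - s k = (p : 𝕎) ^ k * c := by
    intro k
    apply (coeff_eq_iff_mod p K k L (s k)).1
    intro i hi
    obtain ⟨c, hc⟩ := h2 (i + 1) k (by omega)
    have := (coeff_eq_iff_mod p K (i + 1) (s k) (s (i + 1))).2 ⟨c, hc⟩ i (by omega)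
    have hL : L.coeff i = (s (i + 1)).coeff i := rfl
    rw [hL, ← this]
  have h4 : L + p * G p K L = z := by
    apply eq_of_forall_mod p K
    intro k
    obtain ⟨c1, hc1⟩ := h3 k
    obtain ⟨t, ht⟩ := G_lipschitz p K L (s k)
    obtain ⟨c3, hc3⟩ := h1 k
    have e : s (k + 1) = z - p * G p K (s k) := rfl
    refine ⟨c1 + p * (c1 * t) - c3, ?_⟩
    linear_combination hc1 + (p : 𝕎) * ht + (p : 𝕎) * t * hc1 - hc3 + e
  refine ⟨L, ?_⟩
  have hkey := key_identity p K hodd L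
  linear_combination hkey + (p : 𝕎) ^ 2 * h4

end WittHelper

namespace GrpHelper
open WittVector
set_option linter.unusedSectionVars false

variable (p : ℕ) [Fact p.Prime] (K : Type) [Field K] [CharP K p]

local notation "W" => WittVector p K

lemma gZero_spec (u : oneUnits p K) (y : W)
    (hy : ((u : Wˣ) : W) - 1 = p * y) :
    gZero p K u = WittVector.constantCoeff y := by
  have h : ∃ y : W, ((u : Wˣ) : W) - 1 = (p : W) * y := u.2
  have hc : ((u : Wˣ) : W) - 1 = (p : W) * Classical.choose h := Classical.choose_spec h
  have heq : Classical.choose h = y :=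
    mul_left_cancel₀ (WittVector.p_nonzero p K) (by rw [← hc, hy])
  exact congrArg WittVector.constantCoeff heq

lemma constCoeff_val (u : oneUnits p K) (y : W)
    (hy : ((u : Wˣ) : W) - 1 = p * y) :
    WittVector.constantCoeff ((u : Wˣ) : W) = 1 := by
  have : ((u : Wˣ) : W) = 1 + p * y := by linear_combination hy
  rw [this, map_add, map_mul, map_one, map_natCast, CharP.cast_eq_zero K p]
  ring

lemma gZero_mul (u v : oneUnits p K) :
    gZero p K (u * v) = gZero p K u + gZero p K v := by
  obtain ⟨x, hx⟩ := u.2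
  obtain ⟨y, hy⟩ := v.2
  have hw : (((u * v : oneUnits p K) : Wˣ) : W) - 1
      = p * (x * ((v : Wˣ) : W) + y) := by
    have h : (((u * v : oneUnits p K) : Wˣ) : W) = ((u : Wˣ) : W) * ((v : Wˣ) : W) := rfl
    rw [h]
    linear_combination ((v : Wˣ) : W) * hx + hy
  rw [gZero_spec p K _ _ hw, gZero_spec p K u x hx, gZero_spec p K v y hy,
    map_add, map_mul, constCoeff_val p K v y hy]
  ring

lemma gZero_one : gZero p K 1 = 0 := by
  have h : (((1 : oneUnits p K) : Wˣ) : W) - 1 = p * 0 := by simp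
  rw [gZero_spec p K 1 0 h, map_zero]

lemma gZero_inv (u : oneUnits p K) : gZero p K u⁻¹ = -gZero p K u := by
  have := gZero_mul p K u u⁻¹
  rw [mul_inv_cancel, gZero_one] at this
  linear_combination -this

lemma coeff0_one_add (y : W) : ((1 + (p : W) * y).coeff 0 : K) = 1 := by
  have : WittVector.constantCoeff (1 + (p : W) * y) = 1 := by
    rw [map_add, map_mul, map_one, map_natCast, CharP.cast_eq_zero K p]; ring
  rw [WittVector.constantCoeff_apply] at this
  exact this

/-- Section of `gZero`: `a ↦ 1 + p·[a]`. -/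
noncomputable def sec (a : K) : oneUnits p K :=
  ⟨(WittVector.isUnit_of_coeff_zero_ne_zero (1 + (p : W) * WittVector.teichmuller p a)
      (by rw [coeff0_one_add]; exact one_ne_zero)).unit,
    ⟨WittVector.teichmuller p a, by rw [IsUnit.unit_spec]; ring⟩⟩

lemma sec_val (a : K) : (((sec p K a : oneUnits p K) : Wˣ) : W) - 1
    = p * WittVector.teichmuller p a := by
  show ((IsUnit.unit _ : Wˣ) : W) - 1 = _
  rw [IsUnit.unit_spec]
  ring

lemma gZero_sec (a : K) : gZero p K (sec p K a) = a := by
  rw [gZero_spec p K _ _ (sec_val p K a)]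
  rw [show (WittVector.constantCoeff (WittVector.teichmuller p a) : K)
    = (WittVector.teichmuller p a).coeff 0 from rfl]
  exact WittVector.teichmuller_coeff_zero p a

variable [PerfectRing K p]

lemma ker_is_pow (hodd : Odd p) (u : oneUnits p K) (hu : gZero p K u = 0) :
    ∃ v : oneUnits p K, v ^ p = u := by
  obtain ⟨x, hx⟩ := u.2
  have hx0 : x.coeff 0 = 0 := by
    have := gZero_spec p K u x hx
    rw [hu] at this
    rw [show (WittVector.constantCoeff x : K) = x.coeff 0 from rfl] at this
    exact this.symm
  obtain ⟨c, hc⟩ := (WittHelper.low_coeff_zero_iff p K 1 x).1 (by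
    intro i hi
    have : i = 0 := by omega
    rw [this]; exact hx0)
  obtain ⟨w, hw⟩ := WittHelper.exists_pth_root p K hodd c
  have hval : ((u : Wˣ) : W) = 1 + p ^ 2 * c := by
    rw [pow_one] at hc
    have : ((u : Wˣ) : W) = 1 + p * x := by linear_combination hx
    rw [this, hc]; ring
  have hvu : IsUnit (1 + (p : W) * w) :=
    WittVector.isUnit_of_coeff_zero_ne_zero _
      (by rw [coeff0_one_add]; exact one_ne_zero)
  refine ⟨⟨hvu.unit, ⟨w, by rw [IsUnit.unit_spec]; ring⟩⟩, ?_⟩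
  apply Subtype.ext
  apply Units.ext
  show ((hvu.unit : Wˣ) : W) ^ p = ((u : Wˣ) : W)
  rw [IsUnit.unit_spec, hval, hw]

end GrpHelper


namespace FinHelper
set_option linter.unusedSectionVars false

variable (p n : ℕ) [Fact p.Prime] (K : Type) [Field K] [Fintype K] [CharP K p]

noncomputable instance algZMod : Algebra (ZMod p) K := ZMod.algebra K p

instance : Module.Finite (ZMod p) K := (Module.finite_iff_finite (R := ZMod p)).2 (inferInstance)

lemma finrank_eq (hK : Fintype.card K = p ^ n) : Module.finrank (ZMod p) K = n := by
  have h := Module.card_eq_pow_finrank (K := ZMod p) (V := K)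
  rw [ZMod.card, hK] at h
  exact (Nat.pow_right_injective (Fact.out : p.Prime).two_le h.symm)

/-- `x ↦ x^(p^i)` as a `ZMod p`-linear map. -/
noncomputable def frobLM (i : ℕ) : K →ₗ[ZMod p] K :=
  (AddMonoidHom.mk' (fun x : K => x ^ p ^ i)
    (fun a b => add_pow_char_pow a b p i)).toZModLinearMap p

@[simp] lemma frobLM_apply (i : ℕ) (x : K) : frobLM p K i x = x ^ p ^ i := rfl

lemma linIndep (hn : 1 ≤ n) (hK : Fintype.card K = p ^ n) :
    LinearIndependent K (fun i : Fin n => frobLM p K (i : ℕ)) := by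
  classical
  rw [Fintype.linearIndependent_iff]
  intro c hc
  have heval : ∀ x : K, ∑ i : Fin n, c i * x ^ p ^ (i : ℕ) = 0 := by
    intro x
    have := congrArg (fun f : K →ₗ[ZMod p] K => f x) hc
    simpa [Finset.sum_apply] using this
  set q : Polynomial K := ∑ i : Fin n, Polynomial.C (c i) * Polynomial.X ^ (p ^ (i : ℕ))
    with hq
  have hp2 := (Fact.out : p.Prime).two_le
  have hqdeg : q.natDegree < Fintype.card K := by
    rw [hK]
    have h1 : q.natDegree ≤ p ^ (n - 1) := by
      apply Polynomial.natDegree_sum_le_of_forall_le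
      intro i _
      exact le_trans (Polynomial.natDegree_C_mul_le _ _)
        (le_trans (Polynomial.natDegree_X_pow_le _)
          (Nat.pow_le_pow_right (by omega) (by omega : (i : ℕ) ≤ n - 1)))
    exact lt_of_le_of_lt h1 (Nat.pow_lt_pow_right (by omega) (by omega))
  have hq0 : q = 0 := by
    apply Polynomial.eq_zero_of_natDegree_lt_card_of_eval_eq_zero q Function.injective_id
      _ hqdeg
    intro x
    rw [hq]
    simp only [Polynomial.eval_finset_sum, Polynomial.eval_mul, Polynomial.eval_C,
      Polynomial.eval_pow, Polynomial.eval_X, id]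
    exact heval x
  intro i
  have := congrArg (fun r => Polynomial.coeff r (p ^ (i : ℕ))) hq0
  simp only [hq, Polynomial.finset_sum_coeff, Polynomial.coeff_zero] at this
  rw [Finset.sum_eq_single i] at this
  · simpa [Polynomial.coeff_C_mul, Polynomial.coeff_X_pow] using this
  · intro j _ hj
    have hne : p ^ (j : ℕ) ≠ p ^ (i : ℕ) := by
      intro h
      exact hj (Fin.ext (Nat.pow_right_injective hp2 h))
    rw [Polynomial.coeff_C_mul, Polynomial.coeff_X_pow, if_neg (fun h => hne h.symm), mul_zero]
  · intro h
    exact absurd (Finset.mem_univ i) h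

lemma span_top (hn : 1 ≤ n) (hK : Fintype.card K = p ^ n) :
    Submodule.span K (Set.range (fun i : Fin n => frobLM p K (i : ℕ))) = ⊤ := by
  have : Nonempty (Fin n) := ⟨⟨0, by omega⟩⟩
  apply LinearIndependent.span_eq_top_of_card_eq_finrank (linIndep p n K hn hK)
  rw [Fintype.card_fin]
  have b := Module.finBasisOfFinrankEq (ZMod p) K (finrank_eq p n K hK)
  have e := b.constr K (M' := K)
  rw [← e.finrank_eq, Module.finrank_pi]
  simp

lemma exists_repr (hn : 1 ≤ n) (hK : Fintype.card K = p ^ n) (ψ : K →ₗ[ZMod p] K) :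
    ∃ lam : Fin n → K, ψ = ∑ i : Fin n, lam i • frobLM p K (i : ℕ) := by
  have h : ψ ∈ Submodule.span K (Set.range (fun i : Fin n => frobLM p K (i : ℕ))) := by
    rw [span_top p n K hn hK]; trivial
  obtain ⟨lam, hlam⟩ := (Submodule.mem_span_range_iff_exists_fun K).1 h
  exact ⟨lam, by rw [← hlam]⟩

lemma finrank_hom (hn : 1 ≤ n) (hK : Fintype.card K = p ^ n) :
    Module.finrank K (K →ₗ[ZMod p] K) = n := by
  have b := Module.finBasisOfFinrankEq (ZMod p) K (finrank_eq p n K hK)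
  have e := b.constr K (M' := K)
  rw [← e.finrank_eq, Module.finrank_pi]
  simp

end FinHelper

namespace PhiHelper
open GrpHelper FinHelper
set_option linter.unusedSectionVars false

variable (p n : ℕ) [Fact p.Prime] (K : Type) [Field K] [Fintype K] [CharP K p]
  [PerfectRing K p]

local notation "W" => WittVector p K

variable (hodd : Odd p) (φ : oneUnits p K → K)
  (hφ : ∀ u v : oneUnits p K, φ (u * v) = φ u + φ v)

include hφ

lemma phi_one : φ 1 = 0 := by
  have := hφ 1 1
  rw [mul_one] at this
  exact left_eq_add.mp this

lemma phi_pow (v : oneUnits p K) (k : ℕ) : φ (v ^ k) = (k : K) * φ v := by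
  induction k with
  | zero => simpa using phi_one p K φ hφ
  | succ k ih =>
    rw [pow_succ, hφ, ih]
    push_cast
    ring

include hodd in
lemma phi_ker (u : oneUnits p K) (hu : gZero p K u = 0) : φ u = 0 := by
  obtain ⟨v, hv⟩ := GrpHelper.ker_is_pow p K hodd u hu
  rw [← hv, phi_pow p K φ hφ, CharP.cast_eq_zero K p, zero_mul]

include hodd in
lemma phi_factor (u : oneUnits p K) : φ u = φ (sec p K (gZero p K u)) := by
  set s := sec p K (gZero p K u) with hs
  have h1 : gZero p K (u * s⁻¹) = 0 := by
    rw [gZero_mul, gZero_inv, hs, gZero_sec]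
    ring
  have h2 := phi_ker p K hodd φ hφ _ h1
  have h3 : u = u * s⁻¹ * s := (inv_mul_cancel_right u s).symm
  calc φ u = φ (u * s⁻¹ * s) := by rw [← h3]
    _ = φ (u * s⁻¹) + φ s := hφ _ _
    _ = φ s := by rw [h2, zero_add]

include hodd in
lemma psi_add (a b : K) : φ (sec p K (a + b)) = φ (sec p K a) + φ (sec p K b) := by
  set t := (sec p K a * sec p K b)⁻¹ * sec p K (a + b) with htdef
  have h1 : gZero p K t = 0 := by
    rw [htdef, gZero_mul, gZero_inv, gZero_mul, gZero_sec, gZero_sec, gZero_sec]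
    ring
  have h2 := phi_ker p K hodd φ hφ _ h1
  have h3 : sec p K (a + b) = sec p K a * sec p K b * t :=
    (mul_inv_cancel_left _ _).symm
  rw [h3, hφ, hφ, h2, add_zero]

/-- The induced additive map `K → K`. -/
noncomputable def psiLM : K →ₗ[ZMod p] K :=
  (AddMonoidHom.mk' (fun a => φ (sec p K a))
    (fun a b => psi_add p K hodd φ hφ a b)).toZModLinearMap p

@[simp] lemma psiLM_apply (a : K) : psiLM p K hodd φ hφ a = φ (sec p K a) := rfl

include hodd in
lemma phi_eq (u : oneUnits p K) : φ u = psiLM p K hodd φ hφ (gZero p K u) :=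
  phi_factor p K hodd φ hφ u

end PhiHelper

/-- For `p` odd, the set of group homomorphisms from the multiplicative group
`W⁰` to the additive group of `𝔽_{p^n}` is an `𝔽_{p^n}`-vector space under pointwise
operations, and `g₀, …, g_{n−1}` form a basis: every such homomorphism `φ` is uniquely
`φ = λ₀·g₀ + ⋯ + λ_{n−1}·g_{n−1}`; in particular the Hom-space has dimension `n`. -/
theorem hom_oneUnits_basis_gIdx
    (p n : ℕ) [Fact p.Prime] (hodd : Odd p) (hn : 1 ≤ n)
    (K : Type) [Field K] [Fintype K] [CharP K p] (hK : Fintype.card K = p ^ n) :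
    (∀ i : Fin n, ∀ u v : oneUnits p K,
      gIdx p K (i : ℕ) (u * v) = gIdx p K (i : ℕ) u + gIdx p K (i : ℕ) v) ∧
    (∀ φ : oneUnits p K → K, (∀ u v : oneUnits p K, φ (u * v) = φ u + φ v) →
      ∃! lam : Fin n → K, φ = fun u => ∑ i : Fin n, lam i * gIdx p K (i : ℕ) u) ∧
    ∃ S : Submodule K (oneUnits p K → K),
      (S : Set (oneUnits p K → K))
          = {φ : oneUnits p K → K | ∀ u v : oneUnits p K, φ (u * v) = φ u + φ v} ∧
      Module.finrank K S = n := by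
  classical
  haveI : PerfectRing K p := inferInstance
  have hgIdx_sec : ∀ (i : ℕ) (a : K), gIdx p K i (GrpHelper.sec p K a) = a ^ p ^ i := by
    intro i a
    show gZero p K (GrpHelper.sec p K a) ^ p ^ i = a ^ p ^ i
    rw [GrpHelper.gZero_sec]
  have hmul : ∀ (i : ℕ) (u v : oneUnits p K),
      gIdx p K i (u * v) = gIdx p K i u + gIdx p K i v := by
    intro i u v
    show gZero p K (u * v) ^ p ^ i = gZero p K u ^ p ^ i + gZero p K v ^ p ^ i
    rw [GrpHelper.gZero_mul]
    exact add_pow_char_pow _ _ p i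
  -- the representation statement, used twice
  have hrepr : ∀ φ : oneUnits p K → K, (∀ u v : oneUnits p K, φ (u * v) = φ u + φ v) →
      ∃! lam : Fin n → K, φ = fun u => ∑ i : Fin n, lam i * gIdx p K (i : ℕ) u := by
    intro φ hφ
    obtain ⟨lam, hlam⟩ := FinHelper.exists_repr p n K hn hK
      (PhiHelper.psiLM p K hodd φ hφ)
    have hφeq : φ = fun u => ∑ i : Fin n, lam i * gIdx p K (i : ℕ) u := by
      funext u
      rw [PhiHelper.phi_eq p K hodd φ hφ u, hlam]
      simp only [LinearMap.coe_sum, Finset.sum_apply, LinearMap.smul_apply,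
        FinHelper.frobLM_apply, smul_eq_mul]
      rfl
    refine ⟨lam, hφeq, ?_⟩
    intro lam' h'
    have heq : ∀ a : K, ∑ i : Fin n, lam' i * a ^ p ^ (i : ℕ)
        = ∑ i : Fin n, lam i * a ^ p ^ (i : ℕ) := by
      intro a
      have h1 := congrFun h' (GrpHelper.sec p K a)
      have h2 := congrFun hφeq (GrpHelper.sec p K a)
      simp only [hgIdx_sec] at h1 h2
      rw [← h1, ← h2]
    have hc : ∑ i : Fin n, (lam' i - lam i) • FinHelper.frobLM p K (i : ℕ) = 0 := by
      apply LinearMap.ext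
      intro a
      simp only [LinearMap.coe_sum, Finset.sum_apply, LinearMap.smul_apply,
        FinHelper.frobLM_apply, smul_eq_mul, LinearMap.zero_apply, sub_mul,
        Finset.sum_sub_distrib]
      rw [heq a]
      exact sub_self _
    have hind := Fintype.linearIndependent_iff.1 (FinHelper.linIndep p n K hn hK) _ hc
    funext i
    have := hind i
    have := sub_eq_zero.1 this
    exact this
  refine ⟨fun i u v => hmul i u v, hrepr, ?_⟩
  -- The submodule
  refine ⟨{ carrier := {φ : oneUnits p K → K | ∀ u v : oneUnits p K, φ (u * v) = φ u + φ v}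
            add_mem' := by
              intro f g hf hg u v
              simp only [Pi.add_apply, hf u v, hg u v]
              ring
            zero_mem' := by intro u v; simp
            smul_mem' := by
              intro c f hf u v
              simp only [Pi.smul_apply, hf u v, smul_eq_mul]
              ring }, rfl, ?_⟩
  -- the linear equivalence with K →ₗ[ZMod p] K
  set S : Submodule K (oneUnits p K → K) :=
    { carrier := {φ : oneUnits p K → K | ∀ u v : oneUnits p K, φ (u * v) = φ u + φ v}
      add_mem' := by
        intro f g hf hg u v
        simp only [Pi.add_apply, hf u v, hg u v]
        ring
      zero_mem' := by intro u v; simp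
      smul_mem' := by
        intro c f hf u v
        simp only [Pi.smul_apply, hf u v, smul_eq_mul]
        ring } with hS
  show Module.finrank K S = n
  have hmem : ∀ φ : S, ∀ u v : oneUnits p K, φ.1 (u * v) = φ.1 u + φ.1 v := fun φ => φ.2
  let Θ : S →ₗ[K] (K →ₗ[ZMod p] K) :=
    { toFun := fun φ => PhiHelper.psiLM p K hodd φ.1 (hmem φ)
      map_add' := fun φ φ' => LinearMap.ext fun a => rfl
      map_smul' := fun c φ => LinearMap.ext fun a => rfl }
  have hbij : Function.Bijective Θ := by
    constructor
    · intro φ φ' h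
      apply Subtype.ext
      funext u
      have h1 := PhiHelper.phi_eq p K hodd φ.1 (hmem φ) u
      have h2 := PhiHelper.phi_eq p K hodd φ'.1 (hmem φ') u
      rw [h1, h2]
      exact congrFun (congrArg (fun f : K →ₗ[ZMod p] K => (f : K → K)) h) _
    · intro ψ
      refine ⟨⟨fun u => ψ (gZero p K u), ?_⟩, ?_⟩
      · intro u v
        show ψ (gZero p K (u * v)) = ψ (gZero p K u) + ψ (gZero p K v)
        rw [GrpHelper.gZero_mul, map_add]
      · apply LinearMap.ext
        intro a
        show ψ (gZero p K (GrpHelper.sec p K a)) = ψ a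
        rw [GrpHelper.gZero_sec]
  rw [(LinearEquiv.ofBijective Θ hbij).finrank_eq]
  exact FinHelper.finrank_hom p n K hn hK
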